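/- The softmax map σ : ℝ^n → ℝ^n defined by σ(z)_i = exp(z_i) / Σ_{j=1}^n exp(z_j) is 1-Lipschitz with respect to the Euclidean norm: for all z, z' ∈ ℝ^n, ‖σ(z) − σ(z')‖₂ ≤ ‖z − z'‖₂. -/

import Mathlib

/-- The softmax map on `ℝ^n`: `softmax z i = exp (z i) / Σ_j exp (z j)`. -/
noncomputable def softmax {n : ℕ} (z : EuclideanSpace ℝ (Fin n)) :
    EuclideanSpace ℝ (Fin n) :=
  WithLp.toLp 2 (fun i => Real.exp (z i) / ∑ j, Real.exp (z j))


open Finset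

namespace SoftmaxAux

variable {n : ℕ}

/-- The softmax probability vector. -/
noncomputable def pvec (z : Fin n → ℝ) (i : Fin n) : ℝ :=
  Real.exp (z i) / ∑ j, Real.exp (z j)

lemma S_pos (hn : 0 < n) (z : Fin n → ℝ) : 0 < ∑ j, Real.exp (z j) := by
  have : Nonempty (Fin n) := Fin.pos_iff_nonempty.mp hn
  exact Finset.sum_pos (fun j _ => Real.exp_pos _) Finset.univ_nonempty

lemma pvec_nonneg (z : Fin n → ℝ) (i : Fin n) : 0 ≤ pvec z i := by
  unfold pvec; positivity

lemma sum_pvec (hn : 0 < n) (z : Fin n → ℝ) : ∑ i, pvec z i = 1 := by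
  unfold pvec
  rw [← Finset.sum_div, div_self (S_pos hn z).ne']

lemma pvec_le_one (hn : 0 < n) (z : Fin n → ℝ) (i : Fin n) : pvec z i ≤ 1 := by
  have h := sum_pvec hn z
  have := Finset.single_le_sum (f := pvec z) (fun j _ => pvec_nonneg z j) (Finset.mem_univ i)
  linarith

lemma key (hn : 0 < n) (z v : Fin n → ℝ) :
    ∑ i, (pvec z i * v i - pvec z i * ∑ j, pvec z j * v j) ^ 2 ≤ ∑ i, v i ^ 2 := by
  set p := pvec z with hp
  set m := ∑ j, p j * v j with hm
  have h0 : ∀ i, 0 ≤ p i := pvec_nonneg z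
  have h1 : ∀ i, p i ≤ 1 := pvec_le_one hn z
  have step1 : ∀ i, (p i * v i - p i * m) ^ 2 ≤ p i * (v i - m) ^ 2 := by
    intro i
    have h2 : (p i * v i - p i * m) ^ 2 = p i ^ 2 * (v i - m) ^ 2 := by ring
    rw [h2]
    have : p i ^ 2 ≤ p i := by nlinarith [h0 i, h1 i]
    nlinarith [sq_nonneg (v i - m)]
  calc ∑ i, (p i * v i - p i * m) ^ 2 ≤ ∑ i, p i * (v i - m) ^ 2 :=
        Finset.sum_le_sum fun i _ => step1 i
    _ = (∑ i, p i * v i ^ 2) - m ^ 2 := by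
        have expand : ∀ i, p i * (v i - m) ^ 2
            = p i * v i ^ 2 - 2 * m * (p i * v i) + m ^ 2 * p i := fun i => by ring
        simp_rw [expand]
        rw [Finset.sum_add_distrib, Finset.sum_sub_distrib, ← Finset.mul_sum, ← Finset.mul_sum,
          ← hm, sum_pvec hn z]
        ring
    _ ≤ ∑ i, p i * v i ^ 2 := by nlinarith [sq_nonneg m]
    _ ≤ ∑ i, v i ^ 2 := Finset.sum_le_sum fun i _ => by nlinarith [h0 i, h1 i, sq_nonneg (v i)]

/-- The `i`-th coordinate projection on Euclidean space, as a CLM. -/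
noncomputable def P (n : ℕ) (i : Fin n) : EuclideanSpace ℝ (Fin n) →L[ℝ] ℝ :=
  PiLp.proj 2 (fun _ : Fin n => ℝ) i

/-- The derivative of softmax at `z`. -/
noncomputable def D (z : EuclideanSpace ℝ (Fin n)) :
    EuclideanSpace ℝ (Fin n) →L[ℝ] EuclideanSpace ℝ (Fin n) :=
  ((PiLp.continuousLinearEquiv 2 ℝ (fun _ : Fin n => ℝ)).symm :
      (Fin n → ℝ) →L[ℝ] EuclideanSpace ℝ (Fin n)).comp
    (ContinuousLinearMap.pi fun i =>
      pvec z i • P n i - pvec z i • ∑ j, pvec z j • P n j)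

lemma D_apply (z v : EuclideanSpace ℝ (Fin n)) (i : Fin n) :
    D z v i = pvec z i * v i - pvec z i * ∑ j, pvec z j * v j := by
  show (ContinuousLinearMap.pi fun i =>
      pvec z i • P n i - pvec z i • ∑ j, pvec z j • P n j) v i = _
  simp [P, ContinuousLinearMap.pi_apply, ContinuousLinearMap.sum_apply, smul_eq_mul,
    PiLp.proj_apply]

end SoftmaxAux



open SoftmaxAux

/-- Softmax is 1-Lipschitz with respect to the Euclidean norm. -/
theorem stmt16 (n : ℕ) (hn : 0 < n) (z z' : EuclideanSpace ℝ (Fin n)) :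
    ‖softmax z - softmax z'‖ ≤ ‖z - z'‖ := by
  have hderiv : ∀ x : EuclideanSpace ℝ (Fin n), HasFDerivAt softmax (D x) x := by
    intro x
    have hS0 : (∑ j, Real.exp (x j)) ≠ 0 := (S_pos hn x).ne'
    rw [← hasFDerivWithinAt_univ, hasFDerivWithinAt_piLp]
    intro i
    rw [hasFDerivWithinAt_univ]
    have hproj : (PiLp.proj 2 (fun _ : Fin n => ℝ) i) ∘L D x
        = pvec x i • P n i - pvec x i • ∑ j, pvec x j • P n j :=
      ContinuousLinearMap.ext fun v => rfl
    rw [hproj]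
    have hexp : ∀ k : Fin n, HasFDerivAt (fun y : EuclideanSpace ℝ (Fin n) => Real.exp (y k))
        (Real.exp (x k) • P n k) x := fun k => by
      have h := HasDerivAt.comp_hasFDerivAt (𝕜 := ℝ) x (Real.hasDerivAt_exp (x k))
        (PiLp.hasFDerivAt_apply 2 x k)
      simp only [Function.comp_def, P] at h ⊢
      exact h
    have hS : HasFDerivAt (fun y : EuclideanSpace ℝ (Fin n) => ∑ j, Real.exp (y j))
        (∑ j, Real.exp (x j) • P n j) x :=
      HasFDerivAt.fun_sum fun j _ => hexp j
    have hinv : HasFDerivAt (fun y : EuclideanSpace ℝ (Fin n) => (∑ j, Real.exp (y j))⁻¹)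
        ((-(((∑ j, Real.exp (x j)) ^ 2)⁻¹)) • ∑ j, Real.exp (x j) • P n j) x :=
      (hasDerivAt_inv hS0).comp_hasFDerivAt x hS
    have hmul := (hexp i).mul hinv
    have heq : (fun y : EuclideanSpace ℝ (Fin n) => softmax y i) =
        fun y => Real.exp (y i) * (∑ j, Real.exp (y j))⁻¹ := by
      funext y; rw [softmax, WithLp.ofLp_toLp, div_eq_mul_inv]
    rw [heq]
    refine HasFDerivAt.congr_fderiv hmul ?_
    ext v
    simp only [ContinuousLinearMap.sub_apply, ContinuousLinearMap.add_apply,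
      ContinuousLinearMap.smul_apply, ContinuousLinearMap.sum_apply, ContinuousLinearMap.neg_apply,
      smul_eq_mul, pvec, P, PiLp.proj_apply, Finset.mul_sum, mul_neg, neg_mul,
      Finset.sum_neg_distrib]
    have hterm : ∀ k : Fin n,
        (Real.exp (x i) / ∑ j, Real.exp (x j)) * ((Real.exp (x k) / ∑ j, Real.exp (x j)) * v k) =
        Real.exp (x i) * (((∑ j, Real.exp (x j)) ^ 2)⁻¹ * (Real.exp (x k) * v k)) := fun k => by
      field_simp
    simp_rw [hterm]
    rw [div_eq_mul_inv]
    ring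
  have hbound : ∀ x : EuclideanSpace ℝ (Fin n), ‖D x‖ ≤ 1 := by
    intro x
    refine ContinuousLinearMap.opNorm_le_bound _ zero_le_one (fun v => ?_)
    rw [one_mul, EuclideanSpace.norm_eq, EuclideanSpace.norm_eq]
    apply Real.sqrt_le_sqrt
    calc ∑ i, ‖D x v i‖ ^ 2
        = ∑ i, (pvec x i * v i - pvec x i * ∑ j, pvec x j * v j) ^ 2 := by
          simp only [D_apply, Real.norm_eq_abs, sq_abs]
      _ ≤ ∑ i, (v i : ℝ) ^ 2 := key hn x v
      _ = ∑ i, ‖(v i : ℝ)‖ ^ 2 := by simp [Real.norm_eq_abs, sq_abs]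
  have := Convex.norm_image_sub_le_of_norm_hasFDerivWithin_le
    (fun x _ => (hderiv x).hasFDerivWithinAt) (fun x _ => hbound x) convex_univ
    (Set.mem_univ z') (Set.mem_univ z)
  simpa using this
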